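/- Fatou property of ces_φ: Let φ be an Orlicz function, let x ∈ ℝ^ℕ and let (x_n) be a sequence of elements of ces_φ with 0 ≤ x_n(i) ≤ x_{n+1}(i) for all n, i, such that x_n(i) → x(i) as n → ∞ for every i ∈ ℕ, and sup_n ‖x_n‖_φ < ∞. Then x ∈ ces_φ and ‖x_n‖_φ → ‖x‖_φ. -/

import Mathlib

open scoped ENNReal
open Filter

/-- An Orlicz function: `φ : ℝ → [0,∞]` even, convex, left continuous on `ℝ₊`,
continuous at zero, with `φ 0 = 0` and `φ u → ∞` as `u → ∞`. -/
structure OrliczFunction where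
  toFun : ℝ → ℝ≥0∞
  even' : ∀ u : ℝ, toFun (-u) = toFun u
  convex' : ∀ u v t : ℝ, 0 ≤ t → t ≤ 1 →
    toFun (t * u + (1 - t) * v) ≤ ENNReal.ofReal t * toFun u + ENNReal.ofReal (1 - t) * toFun v
  map_zero' : toFun 0 = 0
  leftContinuous' : ∀ t : ℝ, 0 < t → Tendsto toFun (nhdsWithin t (Set.Iio t)) (nhds (toFun t))
  continuousAtZero' : Tendsto toFun (nhds 0) (nhds 0)
  tendsto_top' : Tendsto toFun atTop (nhds ⊤)

/-- The Cesàro mean `σx(n) = (1/n) ∑_{j=1}^n |x j|` (with `0`-based indexing). -/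
noncomputable def cesaroMean (x : ℕ → ℝ) (n : ℕ) : ℝ :=
  (∑ j ∈ Finset.range (n + 1), |x j|) / (n + 1)

/-- The modular `ρ_φ(x) = ∑_i φ(σx(i))`. -/
noncomputable def rho (φ : OrliczFunction) (x : ℕ → ℝ) : ℝ≥0∞ :=
  ∑' n : ℕ, φ.toFun (cesaroMean x n)

/-- The Cesàro–Orlicz sequence space `ces_φ`. -/
def cesOrlicz (φ : OrliczFunction) : Set (ℕ → ℝ) :=
  {x | ∃ lam : ℝ, 0 < lam ∧ rho φ (fun i => lam * x i) < ⊤}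

/-- The Luxemburg norm `‖x‖_φ = inf {λ > 0 : ρ_φ(x/λ) ≤ 1}`. -/
noncomputable def luxNorm (φ : OrliczFunction) (x : ℕ → ℝ) : ℝ :=
  sInf {lam : ℝ | 0 < lam ∧ rho φ (fun i => x i / lam) ≤ 1}

/-- The subspace `A_φ` of `ces_φ`. -/
def Aphi (φ : OrliczFunction) : Set (ℕ → ℝ) :=
  {x | x ∈ cesOrlicz φ ∧ ∀ k : ℝ, 0 < k → ∃ nk : ℕ,
    ∑' n : ℕ, φ.toFun ((k / ((nk + n + 1 : ℕ) : ℝ)) * ∑ i ∈ Finset.range (nk + n + 1), |x i|) < ⊤}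

/-- `∃ n₁, ∑_{n=n₁}^∞ φ(1/n) < ∞`. -/
def TailFinite (φ : OrliczFunction) : Prop :=
  ∃ n₁ : ℕ, ∑' n : ℕ, φ.toFun (((n₁ + n + 1 : ℕ) : ℝ)⁻¹) < ⊤

/-- The `Δ₂`-condition at zero. -/
def Delta2Zero (φ : OrliczFunction) : Prop :=
  ∃ K : ℝ, 0 < K ∧ ∃ a : ℝ, 0 < a ∧ 0 < φ.toFun a ∧
    ∀ u : ℝ, 0 ≤ u → u ≤ a → φ.toFun (2 * u) ≤ ENNReal.ofReal K * φ.toFun u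

/-- `φ` takes only finite values. -/
def FiniteValued (φ : OrliczFunction) : Prop := ∀ u : ℝ, φ.toFun u ≠ ⊤

lemma phi_smul_le (φ : OrliczFunction) (t v : ℝ) (ht0 : 0 ≤ t) (ht1 : t ≤ 1) :
    φ.toFun (t * v) ≤ ENNReal.ofReal t * φ.toFun v := by
  have h := φ.convex' v 0 t ht0 ht1
  simpa [φ.map_zero'] using h

lemma phi_mono (φ : OrliczFunction) {u v : ℝ} (hu : 0 ≤ u) (huv : u ≤ v) :
    φ.toFun u ≤ φ.toFun v := by
  rcases eq_or_lt_of_le (hu.trans huv) with hv | hv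
  · have : u = 0 := le_antisymm (huv.trans hv.symm.le) hu
    simp [this, ← hv, le_refl]
  · have hu' : u = (u / v) * v := by field_simp
    calc φ.toFun u = φ.toFun ((u / v) * v) := by rw [← hu']
    _ ≤ ENNReal.ofReal (u / v) * φ.toFun v :=
        phi_smul_le φ _ _ (div_nonneg hu hv.le) ((div_le_one hv).2 huv)
    _ ≤ 1 * φ.toFun v := by
        gcongr
        exact ENNReal.ofReal_le_one.2 ((div_le_one hv).2 huv)
    _ = φ.toFun v := one_mul _

lemma cesaroMean_nonneg (y : ℕ → ℝ) (n : ℕ) : 0 ≤ cesaroMean y n := by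
  unfold cesaroMean
  positivity

lemma cesaroMean_mono {y z : ℕ → ℝ} (h : ∀ i, |y i| ≤ |z i|) (n : ℕ) :
    cesaroMean y n ≤ cesaroMean z n := by
  unfold cesaroMean
  apply div_le_div_of_nonneg_right (Finset.sum_le_sum fun j _ => h j)
  positivity

lemma cesaroMean_smul (c : ℝ) (y : ℕ → ℝ) (n : ℕ) :
    cesaroMean (fun i => c * y i) n = |c| * cesaroMean y n := by
  unfold cesaroMean
  simp only [abs_mul]
  rw [← Finset.mul_sum, mul_div_assoc]

lemma rho_mono (φ : OrliczFunction) {y z : ℕ → ℝ} (h : ∀ i, |y i| ≤ |z i|) :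
    rho φ y ≤ rho φ z :=
  ENNReal.tsum_le_tsum fun n =>
    phi_mono φ (cesaroMean_nonneg _ _) (cesaroMean_mono h n)

lemma rho_smul_le (φ : OrliczFunction) (c : ℝ) (hc0 : 0 ≤ c) (hc1 : c ≤ 1) (y : ℕ → ℝ) :
    rho φ (fun i => c * y i) ≤ ENNReal.ofReal c * rho φ y := by
  unfold rho
  rw [← ENNReal.tsum_mul_left]
  refine ENNReal.tsum_le_tsum fun n => ?_
  rw [cesaroMean_smul, abs_of_nonneg hc0]
  exact phi_smul_le φ c _ hc0 hc1

lemma luxNorm_nonneg (φ : OrliczFunction) (y : ℕ → ℝ) : 0 ≤ luxNorm φ y :=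
  Real.sInf_nonneg fun _ hl => hl.1.le

lemma exists_lam (φ : OrliczFunction) {y : ℕ → ℝ} (hy : y ∈ cesOrlicz φ) :
    ∃ μ : ℝ, 0 < μ ∧ rho φ (fun i => y i / μ) ≤ 1 := by
  obtain ⟨lam, hlam, hR⟩ := hy
  set R' : ℝ := (rho φ (fun i => lam * y i)).toReal with hR'
  have hR'0 : 0 ≤ R' := ENNReal.toReal_nonneg
  refine ⟨(R' + 1) / lam, by positivity, ?_⟩
  have hc0 : (0:ℝ) ≤ 1 / (R' + 1) := by positivity
  have hc1 : 1 / (R' + 1) ≤ 1 := by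
    rw [div_le_one (by positivity)]; linarith
  have heq : (fun i => y i / ((R' + 1) / lam)) =
      (fun i => (1 / (R' + 1)) * (lam * y i)) := by
    funext i
    field_simp
  rw [heq]
  calc rho φ (fun i => (1 / (R' + 1)) * (lam * y i))
      ≤ ENNReal.ofReal (1 / (R' + 1)) * rho φ (fun i => lam * y i) :=
        rho_smul_le φ _ hc0 hc1 _
    _ = ENNReal.ofReal (1 / (R' + 1)) * ENNReal.ofReal R' := by
        rw [hR', ENNReal.ofReal_toReal hR.ne]
    _ = ENNReal.ofReal ((1 / (R' + 1)) * R') := (ENNReal.ofReal_mul hc0).symm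
    _ ≤ 1 := by
        apply ENNReal.ofReal_le_one.2
        rw [div_mul_eq_mul_div, one_mul, div_le_one (by positivity)]
        linarith

lemma rho_div_le_one (φ : OrliczFunction) {y : ℕ → ℝ} {l : ℝ}
    (hS : ∃ μ : ℝ, 0 < μ ∧ rho φ (fun i => y i / μ) ≤ 1)
    (h : luxNorm φ y < l) : rho φ (fun i => y i / l) ≤ 1 := by
  obtain ⟨μ0, hμ0, hμ0r⟩ := hS
  have hne : {lam : ℝ | 0 < lam ∧ rho φ (fun i => y i / lam) ≤ 1}.Nonempty := ⟨μ0, hμ0, hμ0r⟩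
  obtain ⟨μ, hμmem, hμl⟩ := exists_lt_of_csInf_lt hne h
  refine le_trans (rho_mono φ fun i => ?_) hμmem.2
  rw [abs_div, abs_div, abs_of_pos hμmem.1, abs_of_pos (hμmem.1.trans hμl)]
  exact div_le_div_of_nonneg_left (abs_nonneg _) hμmem.1 hμl.le

lemma luxNorm_mono (φ : OrliczFunction) {y z : ℕ → ℝ} (h : ∀ i, |y i| ≤ |z i|)
    (hz : ∃ μ : ℝ, 0 < μ ∧ rho φ (fun i => z i / μ) ≤ 1) :
    luxNorm φ y ≤ luxNorm φ z := by
  apply csInf_le_csInf ⟨0, fun l hl => hl.1.le⟩ ⟨hz.choose, hz.choose_spec⟩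
  rintro l ⟨hl, hr⟩
  refine ⟨hl, le_trans (rho_mono φ fun i => ?_) hr⟩
  rw [abs_div, abs_div]
  apply div_le_div_of_nonneg_right (h i)
  positivity
/-- Fatou property of `ces_φ`. -/
theorem stmt_3 (φ : OrliczFunction) (x : ℕ → ℝ) (xs : ℕ → ℕ → ℝ)
    (hmem : ∀ n, xs n ∈ cesOrlicz φ)
    (hnonneg : ∀ n i, 0 ≤ xs n i)
    (hmono : ∀ n i, xs n i ≤ xs (n + 1) i)
    (hlim : ∀ i, Tendsto (fun n => xs n i) atTop (nhds (x i)))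
    (hbdd : BddAbove (Set.range fun n => luxNorm φ (xs n))) :
    x ∈ cesOrlicz φ ∧ Tendsto (fun n => luxNorm φ (xs n)) atTop (nhds (luxNorm φ x)) := by
  -- monotonicity in n, pointwise
  have hmono' : ∀ i, Monotone fun n => xs n i := fun i =>
    monotone_nat_of_le_succ fun n => hmono n i
  have hxsle : ∀ n i, xs n i ≤ x i := fun n i =>
    ge_of_tendsto (hlim i) (eventually_atTop.2 ⟨n, fun m hm => hmono' i hm⟩)
  have hx0 : ∀ i, 0 ≤ x i := fun i => (hnonneg 0 i).trans (hxsle 0 i)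
  set M : ℝ := ⨆ n, luxNorm φ (xs n) with hM
  have hleM : ∀ n, luxNorm φ (xs n) ≤ M := fun n => le_ciSup hbdd n
  have hM0 : 0 ≤ M := (luxNorm_nonneg φ (xs 0)).trans (hleM 0)
  -- norms are monotone
  have hNmono : Monotone fun n => luxNorm φ (xs n) := by
    apply monotone_nat_of_le_succ
    intro n
    refine luxNorm_mono φ (fun i => ?_) (exists_lam φ (hmem (n + 1)))
    rw [abs_of_nonneg (hnonneg n i), abs_of_nonneg (hnonneg (n + 1) i)]
    exact hmono n i
  have htendM : Tendsto (fun n => luxNorm φ (xs n)) atTop (nhds M) :=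
    tendsto_atTop_ciSup hNmono hbdd
  -- key: rho (x / l) ≤ 1 for all l > M
  have hkey : ∀ l : ℝ, M < l → rho φ (fun i => x i / l) ≤ 1 := by
    intro l hl
    have hl0 : 0 < l := hM0.trans_lt hl
    have hn1 : ∀ n, rho φ (fun i => xs n i / l) ≤ 1 := fun n =>
      rho_div_le_one φ (exists_lam φ (hmem n)) ((hleM n).trans_lt hl)
    -- pointwise convergence of φ ∘ cesaroMean
    have hcm : ∀ i, Tendsto (fun n => cesaroMean (fun j => xs n j / l) i) atTop
        (nhds (cesaroMean (fun j => x j / l) i)) := by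
      intro i
      unfold cesaroMean
      apply Tendsto.div_const
      apply tendsto_finset_sum
      intro j _
      exact ((hlim j).div_const l).abs
    have hcmmono : ∀ i, Monotone fun n => cesaroMean (fun j => xs n j / l) i := by
      intro i
      apply monotone_nat_of_le_succ
      intro n
      refine cesaroMean_mono (fun j => ?_) i
      rw [abs_div, abs_div]
      apply div_le_div_of_nonneg_right ?_ (abs_nonneg l)
      rw [abs_of_nonneg (hnonneg n j), abs_of_nonneg (hnonneg (n + 1) j)]
      exact hmono n j
    have hcmle : ∀ i n, cesaroMean (fun j => xs n j / l) i ≤ cesaroMean (fun j => x j / l) i :=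
      fun i n => ge_of_tendsto (hcm i) (eventually_atTop.2 ⟨n, fun m hm => hcmmono i hm⟩)
    have hphi : ∀ i, Tendsto (fun n => φ.toFun (cesaroMean (fun j => xs n j / l) i)) atTop
        (nhds (φ.toFun (cesaroMean (fun j => x j / l) i))) := by
      intro i
      set t : ℝ := cesaroMean (fun j => x j / l) i with ht
      by_cases hc : ∃ N, cesaroMean (fun j => xs N j / l) i = t
      · obtain ⟨N, hN⟩ := hc
        apply Tendsto.congr' (f₁ := fun _ => φ.toFun t) _ tendsto_const_nhds
        filter_upwards [eventually_atTop.2 ⟨N, fun m hm => hm⟩] with m hm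
        have h1 : cesaroMean (fun j => xs m j / l) i ≤ t := hcmle i m
        have h2 : t ≤ cesaroMean (fun j => xs m j / l) i := hN ▸ hcmmono i hm
        rw [le_antisymm h1 h2]
      · push_neg at hc
        have hlt : ∀ n, cesaroMean (fun j => xs n j / l) i < t :=
          fun n => lt_of_le_of_ne (hcmle i n) (hc n)
        have ht0 : 0 < t := (cesaroMean_nonneg _ i).trans_lt (hlt 0)
        apply (φ.leftContinuous' t ht0).comp
        apply tendsto_nhdsWithin_of_tendsto_nhds_of_eventually_within _ (hcm i)
        exact Eventually.of_forall fun n => hlt n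
    -- conclude by partial sums
    rw [rho, ENNReal.tsum_eq_iSup_sum]
    apply iSup_le
    intro s
    have hts : Tendsto (fun n => ∑ i ∈ s, φ.toFun (cesaroMean (fun j => xs n j / l) i))
        atTop (nhds (∑ i ∈ s, φ.toFun (cesaroMean (fun j => x j / l) i))) :=
      tendsto_finset_sum s fun i _ => hphi i
    refine le_of_tendsto hts (Eventually.of_forall fun n => ?_)
    exact le_trans (ENNReal.sum_le_tsum s) (hn1 n)
  have hSx : ∀ l : ℝ, M < l → l ∈ {lam : ℝ | 0 < lam ∧ rho φ (fun i => x i / lam) ≤ 1} :=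
    fun l hl => ⟨hM0.trans_lt hl, hkey l hl⟩
  have hxmem : x ∈ cesOrlicz φ := by
    refine ⟨(M + 1)⁻¹, by positivity, ?_⟩
    have heq : (fun i => (M + 1)⁻¹ * x i) = fun i => x i / (M + 1) := by
      funext i; rw [div_eq_mul_inv, mul_comm]
    rw [heq]
    exact lt_of_le_of_lt (hkey (M + 1) (by linarith)) (by norm_num)
  refine ⟨hxmem, ?_⟩
  have hBb : BddBelow {lam : ℝ | 0 < lam ∧ rho φ (fun i => x i / lam) ≤ 1} :=
    ⟨0, fun l hl => hl.1.le⟩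
  have hle1 : luxNorm φ x ≤ M := by
    apply le_of_forall_gt_imp_ge_of_dense
    intro l hl
    exact csInf_le hBb (hSx l hl)
  have hle2 : M ≤ luxNorm φ x := by
    apply ciSup_le
    intro n
    refine luxNorm_mono φ (fun i => ?_) ⟨M + 1, by positivity, hkey (M + 1) (by linarith)⟩
    rw [abs_of_nonneg (hnonneg n i), abs_of_nonneg (hx0 i)]
    exact hxsle n i
  rw [show luxNorm φ x = M from le_antisymm hle1 hle2]
  exact htendM
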